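/- Let a,b,c,d ∈ K with a³ = b³ = c³ = d³ = −1, and suppose there exist linear forms m, n, w, t in S such that the determinant of the matrix [[0, Y₁−aY₄, Y₂−bY₃],[Y₁−cY₂, m, n],[Y₃−dY₄, w, t]] equals f₄. Then (bcd)² + a·bcd + a² = 0; equivalently, bcd = εa for some ε ∈ K with ε³ = 1 and ε ≠ 1. -/

import Mathlib

open MvPolynomial Matrix TensorProduct

set_option maxHeartbeats 1000000
set_option synthInstance.maxHeartbeats 400000

noncomputable section

/-- The polynomial ring `S = K[Y₁,Y₂,Y₃,Y₄]`. -/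
abbrev S (K : Type) [Field K] := MvPolynomial (Fin 4) K

/-- The variables `Y₁,…,Y₄` (indexed by `1,…,4`). -/
def Yv (K : Type) [Field K] : ℕ → S K
  | 1 => X 0
  | 2 => X 1
  | 3 => X 2
  | 4 => X 3
  | _ => 0

/-- `f₄ = Y₁³+Y₂³+Y₃³+Y₄³`. -/
def f4 (K : Type) [Field K] : S K :=
  Yv K 1 ^ 3 + Yv K 2 ^ 3 + Yv K 3 ^ 3 + Yv K 4 ^ 3

/-- The hypersurface ring `R₄ = S/(f₄)`. -/
abbrev R4 (K : Type) [Field K] := S K ⧸ Ideal.span {f4 K}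

/-- The canonical projection `S → R₄`. -/
abbrev proj (K : Type) [Field K] : S K →+* R4 K := Ideal.Quotient.mk (Ideal.span {f4 K})

/-- The `R₄`-linear map `R₄ⁿ → R₄ⁿ` induced by an `n × n` matrix over `S`. -/
abbrev mbar (K : Type) [Field K] {n : ℕ} (M : Matrix (Fin n) (Fin n) (S K)) :
    (Fin n → R4 K) →ₗ[R4 K] (Fin n → R4 K) :=
  Matrix.mulVecLin (M.map ⇑(proj K))

/-- The cokernel of the `R₄`-linear map induced by a matrix over `S`. -/
abbrev coker (K : Type) [Field K] {n : ℕ} (M : Matrix (Fin n) (Fin n) (S K)) :=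
  (Fin n → R4 K) ⧸ LinearMap.range (mbar K M)

/-- The matrix `φ_ij(a,b)`. -/
def phiM (K : Type) [Field K] (a b : K) (i j s : ℕ) : Matrix (Fin 2) (Fin 2) (S K) :=
  !![Yv K 1 - C a * Yv K s, -(Yv K i ^ 2 + C b * Yv K i * Yv K j + C b ^ 2 * Yv K j ^ 2);
     Yv K i - C b * Yv K j, Yv K 1 ^ 2 + C a * Yv K 1 * Yv K s + C a ^ 2 * Yv K s ^ 2]

/-- The matrix `ψ_ij(a,b)`. -/
def psiM (K : Type) [Field K] (a b : K) (i j s : ℕ) : Matrix (Fin 2) (Fin 2) (S K) :=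
  !![Yv K 1 ^ 2 + C a * Yv K 1 * Yv K s + C a ^ 2 * Yv K s ^ 2,
       Yv K i ^ 2 + C b * Yv K i * Yv K j + C b ^ 2 * Yv K j ^ 2;
     -(Yv K i - C b * Yv K j), Yv K 1 - C a * Yv K s]

/-- The set `𝓛_i` of linear forms `Y_i - a Y_j` with `a³ = -1` and `i < j ≤ 4`. -/
def Lset (K : Type) [Field K] (i : ℕ) : Set (S K) :=
  {p | ∃ (a : K) (j : ℕ), a ^ 3 = -1 ∧ i < j ∧ j ≤ 4 ∧ p = Yv K i - C a * Yv K j}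

/-- The matrix `α(b,c,d,ε)`, where `a = ε²bcd`. -/
def alphaM (K : Type) [Field K] (b c d ε : K) : Matrix (Fin 3) (Fin 3) (S K) :=
  let a := ε ^ 2 * b * c * d
  !![0, Yv K 1 - C a * Yv K 4, Yv K 2 - C b * Yv K 3;
     Yv K 1 - C c * Yv K 2, -(C (b ^ 2) * Yv K 3) - C (a * b * c ^ 2 * ε ^ 2) * Yv K 4,
       C (b ^ 2 * c ^ 2) * Yv K 3 - C (a * b * c * ε ^ 2) * Yv K 4;
     Yv K 3 - C d * Yv K 4, C (c ^ 2) * Yv K 2 + C (b * c ^ 2) * Yv K 3 + C (a * c) * Yv K 4,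
       -(Yv K 1) - C c * Yv K 2 - C a * Yv K 4]

/-- The matrix `β(b,c,d,ε)`, the transpose of `α(b,c,d,ε)`. -/
def betaM (K : Type) [Field K] (b c d ε : K) : Matrix (Fin 3) (Fin 3) (S K) :=
  (alphaM K b c d ε).transpose

/-- The matrix `η(a,b,c,ε)`. -/
def etaM (K : Type) [Field K] (a b c ε : K) : Matrix (Fin 3) (Fin 3) (S K) :=
  !![0, Yv K 1 + Yv K 2, Yv K 3 - C a * Yv K 4;
     Yv K 1 + C ε * Yv K 2, -(Yv K 3) + C c * Yv K 4, 0;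
     Yv K 3 - C b * Yv K 4, 0, -(Yv K 1) - C (ε ^ 2) * Yv K 2]

/-- The matrix `θ(a,b,c)` (denoted `ϑ(a,b,c)` in the paper). -/
def thetaM (K : Type) [Field K] (a b c : K) : Matrix (Fin 3) (Fin 3) (S K) :=
  !![0, Yv K 1 + Yv K 3, Yv K 2 - C a * Yv K 4;
     Yv K 1 - C (a ^ 2 * b) * Yv K 3, -(Yv K 2) + C c * Yv K 4, 0;
     Yv K 2 - C b * Yv K 4, 0, -(Yv K 1) + C (a * b ^ 2) * Yv K 3]

/-- The matrix `D((a,b,c),(p,q,r))`. -/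
def DM (K : Type) [Field K] (a b c p q r : K) : Matrix (Fin 3) (Fin 3) (S K) :=
  !![0, Yv K 1 - C a * Yv K 2, Yv K 3 - C p * Yv K 4;
     Yv K 1 - C c * Yv K 2, -(Yv K 3) + C r * Yv K 4, 0;
     Yv K 3 - C q * Yv K 4, 0, -(Yv K 1) + C b * Yv K 2]

/-- `(a,b,c)` is a permutation (i.e. an enumeration) of the three cube roots of `-1` in `K`. -/
def cubePerm (K : Type) [Field K] (a b c : K) : Prop :=
  a ^ 3 = -1 ∧ b ^ 3 = -1 ∧ c ^ 3 = -1 ∧ a ≠ b ∧ a ≠ c ∧ b ≠ c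


theorem stmt10 (K : Type) [Field K] [IsAlgClosed K] [CharZero K]
    (a b c d : K) (ha : a ^ 3 = -1) (hb : b ^ 3 = -1) (hc : c ^ 3 = -1) (hd : d ^ 3 = -1)
    (h : ∃ m n w t : S K, m.IsHomogeneous 1 ∧ n.IsHomogeneous 1 ∧
      w.IsHomogeneous 1 ∧ t.IsHomogeneous 1 ∧
      (!![0, Yv K 1 - C a * Yv K 4, Yv K 2 - C b * Yv K 3;
          Yv K 1 - C c * Yv K 2, m, n;
          Yv K 3 - C d * Yv K 4, w, t]).det = f4 K) :
    (b * c * d) ^ 2 + a * (b * c * d) + a ^ 2 = 0 ∧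
    ∃ ε : K, ε ^ 3 = 1 ∧ ε ≠ 1 ∧ b * c * d = ε * a := by
  classical
  have ha0 : a ≠ 0 := by
    intro h0
    rw [h0] at ha
    norm_num at ha
  -- Main step: b*c*d ≠ a
  have hne : b * c * d ≠ a := by
    intro heq
    obtain ⟨m, n, w, t, -, -, -, -, hdet⟩ := h
    rw [Matrix.det_fin_three] at hdet
    simp at hdet
    have h2 := congrArg (aeval (R := K)
      ![algebraMap K (DualNumber K) a, algebraMap K (DualNumber K) (b * d),
        algebraMap K (DualNumber K) d, 1 + DualNumber.eps]) hdet
    simp only [f4, Yv, map_add, map_sub, _root_.map_mul, map_neg, map_pow, map_zero,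
      _root_.map_one,
      aeval_X, aeval_C, Matrix.cons_val_zero, Matrix.cons_val_one, Matrix.head_cons,
      Matrix.cons_val_two, Matrix.cons_val_three, Matrix.tail_cons] at h2
    set e : DualNumber K := DualNumber.eps with hedef
    set T := aeval
      ![algebraMap K (DualNumber K) a,
        algebraMap K (DualNumber K) b * algebraMap K (DualNumber K) d,
        algebraMap K (DualNumber K) d, 1 + e] t with hT
    set N := aeval
      ![algebraMap K (DualNumber K) a,
        algebraMap K (DualNumber K) b * algebraMap K (DualNumber K) d,
        algebraMap K (DualNumber K) d, 1 + e] n with hN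
    have hz : algebraMap K (DualNumber K) a -
        algebraMap K (DualNumber K) c *
          (algebraMap K (DualNumber K) b * algebraMap K (DualNumber K) d) = 0 := by
      rw [← _root_.map_mul, ← _root_.map_mul, ← map_sub, show a - c * (b * d) = 0 by
        rw [← heq]; ring, map_zero]
    have he : e * e = 0 := DualNumber.eps_mul_eps
    have hA : algebraMap K (DualNumber K) a ^ 3 = -1 := by
      rw [← map_pow, ha, map_neg, _root_.map_one]
    have hB : algebraMap K (DualNumber K) b ^ 3 = -1 := by
      rw [← map_pow, hb, map_neg, _root_.map_one]
    have h3 : (3 : DualNumber K) * e = 0 := by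
      linear_combination (-1 : DualNumber K) * h2 +
        (algebraMap K (DualNumber K) a * T * e) * hz +
        (algebraMap K (DualNumber K) a * algebraMap K (DualNumber K) d * N - 3 - e) * he +
        (-1 : DualNumber K) * hA + (-(algebraMap K (DualNumber K) d ^ 3)) * hB
    rw [hedef] at h3
    have h4 := congrArg TrivSqZeroExt.snd h3
    simp [TrivSqZeroExt.snd_mul, show TrivSqZeroExt.fst (3 : DualNumber K) = (3 : K) from rfl]
      at h4
  -- From (bcd)^3 = a^3 and bcd ≠ a we get the quadratic
  have hcube : (b * c * d) ^ 3 - a ^ 3 = 0 := by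
    rw [mul_pow, mul_pow, hb, hc, hd, ha]; ring
  have hfac : (b * c * d - a) * ((b * c * d) ^ 2 + a * (b * c * d) + a ^ 2) = 0 := by
    rw [← hcube]; ring
  have hq : (b * c * d) ^ 2 + a * (b * c * d) + a ^ 2 = 0 := by
    rcases mul_eq_zero.mp hfac with h1 | h1
    · exact absurd (sub_eq_zero.mp h1) hne
    · exact h1
  refine ⟨hq, b * c * d / a, ?_, ?_, ?_⟩
  · field_simp
    rw [hb, hc, hd, ha]; ring
  · intro h1
    exact hne (by field_simp at h1; exact h1)
  · field_simp
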